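/- If y* minimizes the dual function f(y) = ½‖p_K(c + Aᵀy)‖² − bᵀy, then x* = p_K(c + Aᵀy*) solves the primal problem: x* ∈ K, Ax* = b, and x* minimizes ½‖x − c‖² over all x ∈ K with Ax = b. -/

import Mathlib

open RealInnerProductSpace

set_option maxHeartbeats 1000000

theorem dual_minimizer_gives_primal_solution (n m : ℕ)
    (K : Set (EuclideanSpace ℝ (Fin n)))
    (hKne : K.Nonempty) (hKcl : IsClosed K) (hKcvx : Convex ℝ K)
    (hKcone : ∀ x ∈ K, ∀ t : ℝ, 0 ≤ t → t • x ∈ K)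
    (pK : EuclideanSpace ℝ (Fin n) → EuclideanSpace ℝ (Fin n))
    (hpK : ∀ z, pK z ∈ K ∧ ∀ x ∈ K, ‖pK z - z‖ ≤ ‖x - z‖)
    (A : EuclideanSpace ℝ (Fin n) →ₗ[ℝ] EuclideanSpace ℝ (Fin m))
    (b : EuclideanSpace ℝ (Fin m)) (c : EuclideanSpace ℝ (Fin n))
    (ystar : EuclideanSpace ℝ (Fin m))
    (hystar : ∀ y, (1/2) * ‖pK (c + LinearMap.adjoint A ystar)‖^2 - ⟪b, ystar⟫ ≤
        (1/2) * ‖pK (c + LinearMap.adjoint A y)‖^2 - ⟪b, y⟫) :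
    pK (c + LinearMap.adjoint A ystar) ∈ K ∧
      A (pK (c + LinearMap.adjoint A ystar)) = b ∧
      ∀ x ∈ K, A x = b →
        (1/2) * ‖pK (c + LinearMap.adjoint A ystar) - c‖^2 ≤ (1/2) * ‖x - c‖^2 := by
  -- Variational inequality for the projection
  have hVI : ∀ z, ∀ x ∈ K, ⟪z - pK z, x - pK z⟫ ≤ 0 := by
    intro z x hx
    obtain ⟨hmem, hle⟩ := hpK z
    haveI : Nonempty K := ⟨⟨pK z, hmem⟩⟩
    have heq : ‖z - pK z‖ = ⨅ w : K, ‖z - w‖ := by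
      apply le_antisymm
      · apply le_ciInf; intro w
        calc ‖z - pK z‖ = ‖pK z - z‖ := norm_sub_rev _ _
          _ ≤ ‖(w : EuclideanSpace ℝ (Fin n)) - z‖ := hle w w.2
          _ = ‖z - w‖ := norm_sub_rev _ _
      · have hbd : BddBelow (Set.range fun w : K => ‖z - (w : EuclideanSpace ℝ (Fin n))‖) := by
          refine ⟨0, ?_⟩
          rintro _ ⟨w, rfl⟩
          exact norm_nonneg _
        exact ciInf_le hbd ⟨pK z, hmem⟩
    exact (norm_eq_iInf_iff_real_inner_le_zero hKcvx hmem).1 heq x hx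
  obtain ⟨x0, hx0⟩ := hKne
  have h0K : (0 : EuclideanSpace ℝ (Fin n)) ∈ K := by
    simpa using hKcone x0 hx0 0 le_rfl
  -- orthogonality
  have horth : ∀ z, ⟪z - pK z, pK z⟫ = 0 := by
    intro z
    have h1 := hVI z 0 h0K
    have h2K : (2 : ℝ) • pK z ∈ K := hKcone _ (hpK z).1 2 (by norm_num)
    have h2 := hVI z ((2 : ℝ) • pK z) h2K
    have e2 : (2 : ℝ) • pK z - pK z = pK z := by
      rw [two_smul]; abel
    rw [e2] at h2
    rw [zero_sub, inner_neg_right] at h1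
    linarith
  -- nonpositivity on K
  have hneg : ∀ z, ∀ x ∈ K, ⟪z - pK z, x⟫ ≤ 0 := by
    intro z x hx
    have h1 := hVI z x hx
    have h2 := horth z
    have h3 : ⟪z - pK z, x⟫ = ⟪z - pK z, x - pK z⟫ + ⟪z - pK z, pK z⟫ := by
      rw [← inner_add_right, sub_add_cancel]
    linarith
  -- smoothness-type inequality
  have hsmooth : ∀ z v, ‖pK (z + v)‖^2 ≤ ‖pK z + v‖^2 := by
    intro z v
    set u := pK z + v with hu
    set p := pK (z + v) with hp
    have h1 : ⟪(z + v) - p, p⟫ = 0 := horth (z + v)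
    have h2 : ⟪z - pK z, p⟫ ≤ 0 := hneg z p (hpK (z + v)).1
    have hup : u - p = ((z + v) - p) - (z - pK z) := by
      rw [hu]; abel
    have key : 0 ≤ ⟪u - p, p⟫ := by
      rw [hup, inner_sub_left, h1]; linarith
    have expand : ‖u‖^2 = ‖u - p‖^2 + 2 * ⟪u - p, p⟫ + ‖p‖^2 := by
      have : u = (u - p) + p := by abel
      rw [this]
      rw [norm_add_sq_real]
      ring_nf
      abel
    nlinarith [sq_nonneg ‖u - p‖]
  set adA := LinearMap.adjoint A with hadA
  set zs := c + adA ystar with hzs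
  set p := pK zs with hpdef
  set d := b - A p with hd
  -- step inequality from minimality
  have hstep : ∀ t : ℝ, 0 ≤ -(t * ‖d‖^2) + t^2/2 * ‖adA d‖^2 := by
    intro t
    have h1 := hystar (ystar + t • d)
    have harg : c + adA (ystar + t • d) = zs + t • adA d := by
      rw [hzs, map_add, map_smul]; abel
    rw [harg] at h1
    have h2 := hsmooth zs (t • adA d)
    rw [← hpdef] at h2
    have hexp : ‖p + t • adA d‖^2 = ‖p‖^2 + 2 * (t * ⟪A p, d⟫) + t^2 * ‖adA d‖^2 := by
      rw [norm_add_sq_real, real_inner_smul_right, LinearMap.adjoint_inner_right,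
        norm_smul, mul_pow, Real.norm_eq_abs, sq_abs]
    have hby : ⟪b, ystar + t • d⟫ = ⟪b, ystar⟫ + t * ⟪b, d⟫ := by
      rw [inner_add_right, real_inner_smul_right]
    rw [hby] at h1
    have hApd : ⟪A p, d⟫ - ⟪b, d⟫ = -‖d‖^2 := by
      have : ⟪A p - b, d⟫ = ⟪A p, d⟫ - ⟪b, d⟫ := inner_sub_left _ _ _
      have h4 : A p - b = -d := by rw [hd]; abel
      rw [h4, inner_neg_left, real_inner_self_eq_norm_sq] at this
      linarith
    have hApd' : t * (⟪A p, d⟫ - ⟪b, d⟫) = t * (-‖d‖^2) := by rw [hApd]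
    linarith [h1, h2, hexp, hApd']
  have hdzero : d = 0 := by
    by_contra hd0
    have hr : 0 < ‖d‖^2 := by
      have := norm_pos_iff.mpr hd0
      positivity
    have key : ∀ t : ℝ, 0 < t → ‖d‖^2 ≤ t / 2 * ‖adA d‖^2 := by
      intro t ht
      have := hstep t
      nlinarith
    by_cases hs : ‖adA d‖^2 = 0
    · have := key 1 one_pos
      rw [hs] at this
      linarith
    · have hspos : 0 < ‖adA d‖^2 := lt_of_le_of_ne (sq_nonneg _) (Ne.symm hs)
      have htpos : 0 < ‖d‖^2 / ‖adA d‖^2 := div_pos hr hspos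
      have h := key _ htpos
      have he : ‖d‖^2 / ‖adA d‖^2 / 2 * ‖adA d‖^2 = ‖d‖^2 / 2 := by
        field_simp
        ring_nf
        have hne : ‖adA d‖ ≠ 0 := fun h0 => hs (by rw [h0]; ring)
        field_simp
      rw [he] at h
      linarith
  have hAp : A p = b := by
    have : b - A p = 0 := hdzero
    have := sub_eq_zero.mp this
    exact this.symm
  refine ⟨(hpK zs).1, hAp, ?_⟩
  intro x hx hAx
  have horth' : ⟪zs - p, p⟫ = 0 := horth zs
  have hneg' : ⟪zs - p, x⟫ ≤ 0 := hneg zs x hx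
  have hinner : 0 ≤ ⟪x - p, p - c⟫ := by
    have hpc : p - c = adA ystar - (zs - p) := by rw [hzs]; abel
    have h1 : ⟪x - p, adA ystar⟫ = ⟪A x - A p, ystar⟫ := by
      rw [LinearMap.adjoint_inner_right, map_sub]
    have h2 : A x - A p = 0 := by rw [hAx, hAp]; abel
    rw [hpc, inner_sub_right, h1, h2, inner_zero_left]
    have h3 : ⟪x - p, zs - p⟫ = ⟪zs - p, x⟫ - ⟪zs - p, p⟫ := by
      rw [real_inner_comm, inner_sub_right]
    rw [h3, horth']
    linarith
  have hexp : ‖x - c‖^2 = ‖x - p‖^2 + 2 * ⟪x - p, p - c⟫ + ‖p - c‖^2 := by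
    have : x - c = (x - p) + (p - c) := by abel
    rw [this, norm_add_sq_real]
  nlinarith [sq_nonneg ‖x - p‖]
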